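/- Let d = (d₀, d₀, d₁) on {1,2,3} with 0 < d₁ < d₀, γ = d₁/d₀, and fix φ with 1 - γ < φ < 1. Define M = [[1-φ, φ, 0],[φ, 0, (1-φ)/γ],[0, 1-φ, 1-(1-φ)/γ]]. Then M is d-stochastic, but M cannot be written as any finite product of T^d-transforms. -/

import Mathlib

open Matrix BigOperators

/-- The `d`-swap `P^d(i,j)`: the identity except on the pair `{i,j}`, where it has
entries `(i,i) = 1 - d j / d i`, `(i,j) = 1`, `(j,i) = d j / d i`, `(j,j) = 0`. -/
noncomputable def Pswap {n : ℕ} (d : Fin n → ℝ) (i j : Fin n) : Matrix (Fin n) (Fin n) ℝ :=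
  Matrix.of fun k l =>
    if k = i ∧ l = i then 1 - d j / d i
    else if k = i ∧ l = j then 1
    else if k = j ∧ l = i then d j / d i
    else if k = j ∧ l = j then 0
    else if k = l then 1 else 0

/-- The `T^d`-transform `T^d_λ(i,j) = (1-λ)·I + λ·P^d(i,j)`. -/
noncomputable def Td {n : ℕ} (d : Fin n → ℝ) (lam : ℝ) (i j : Fin n) :
    Matrix (Fin n) (Fin n) ℝ :=
  (1 - lam) • (1 : Matrix (Fin n) (Fin n) ℝ) + lam • Pswap d i j

/-! ### Support-pattern machinery -/

abbrev Pat := Bool×Bool×Bool×Bool×Bool×Bool×Bool×Bool×Bool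

def bmul (p q : Pat) : Pat :=
  match p, q with
  | (a0,a1,a2,a3,a4,a5,a6,a7,a8), (b0,b1,b2,b3,b4,b5,b6,b7,b8) =>
    ( (a0&&b0)||(a1&&b3)||(a2&&b6), (a0&&b1)||(a1&&b4)||(a2&&b7), (a0&&b2)||(a1&&b5)||(a2&&b8),
      (a3&&b0)||(a4&&b3)||(a5&&b6), (a3&&b1)||(a4&&b4)||(a5&&b7), (a3&&b2)||(a4&&b5)||(a5&&b8),
      (a6&&b0)||(a7&&b3)||(a8&&b6), (a6&&b1)||(a7&&b4)||(a8&&b7), (a6&&b2)||(a7&&b5)||(a8&&b8) )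

noncomputable def supp (X : Matrix (Fin 3) (Fin 3) ℝ) : Pat :=
  (decide (0 < X 0 0), decide (0 < X 0 1), decide (0 < X 0 2),
   decide (0 < X 1 0), decide (0 < X 1 1), decide (0 < X 1 2),
   decide (0 < X 2 0), decide (0 < X 2 1), decide (0 < X 2 2))

def S41 : List Pat := [
  (false, true, false, true, false, false, false, false, true),
  (false, true, false, true, false, true, true, false, false),
  (false, true, false, true, false, true, true, false, true),
  (false, true, true, true, false, false, false, true, false),
  (false, true, true, true, false, false, false, true, true),
  (false, true, true, true, true, false, true, false, false),
  (false, true, true, true, true, false, true, true, false),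
  (false, true, true, true, true, true, true, false, false),
  (false, true, true, true, true, true, true, true, true),
  (true, false, false, false, true, false, false, false, true),
  (true, false, false, false, true, true, false, true, false),
  (true, false, false, false, true, true, false, true, true),
  (true, false, true, false, true, false, true, false, false),
  (true, false, true, false, true, false, true, false, true),
  (true, false, true, true, true, false, false, true, false),
  (true, false, true, true, true, false, true, true, false),
  (true, false, true, true, true, true, false, true, false),
  (true, false, true, true, true, true, true, true, true),
  (true, true, false, false, true, true, true, false, false),
  (true, true, false, false, true, true, true, true, false),
  (true, true, false, true, false, true, false, true, false),
  (true, true, false, true, false, true, true, true, false),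
  (true, true, false, true, true, false, false, false, true),
  (true, true, false, true, true, true, false, true, true),
  (true, true, false, true, true, true, true, false, true),
  (true, true, false, true, true, true, true, true, false),
  (true, true, false, true, true, true, true, true, true),
  (true, true, true, false, true, true, true, false, false),
  (true, true, true, false, true, true, true, true, true),
  (true, true, true, true, false, true, false, true, false),
  (true, true, true, true, false, true, true, true, true),
  (true, true, true, true, true, false, false, true, true),
  (true, true, true, true, true, false, true, false, true),
  (true, true, true, true, true, false, true, true, false),
  (true, true, true, true, true, false, true, true, true),
  (true, true, true, true, true, true, false, true, false),
  (true, true, true, true, true, true, false, true, true),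
  (true, true, true, true, true, true, true, false, false),
  (true, true, true, true, true, true, true, false, true),
  (true, true, true, true, true, true, true, true, false),
  (true, true, true, true, true, true, true, true, true)]

def Gpat : List Pat := [
  (true, false, false, false, true, false, false, false, true),
  (true, true, false, true, true, false, false, false, true),
  (false, true, false, true, false, false, false, false, true),
  (true, false, true, false, true, false, true, false, true),
  (true, false, true, false, true, false, true, false, false),
  (true, false, false, false, true, true, false, true, true),
  (true, false, false, false, true, true, false, true, false)]

set_option maxRecDepth 100000 in
lemma closure41 : ∀ g ∈ Gpat, ∀ s ∈ S41, bmul g s ∈ S41 := by decide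

lemma id_mem : ((true,false,false,false,true,false,false,false,true) : Pat) ∈ S41 := by decide

lemma SM_not_mem : ((true,true,false,true,false,true,false,true,true) : Pat) ∉ S41 := by decide

lemma pos_dot {x0 x1 x2 y0 y1 y2 : ℝ} (hx0 : 0 ≤ x0) (hx1 : 0 ≤ x1) (hx2 : 0 ≤ x2)
    (hy0 : 0 ≤ y0) (hy1 : 0 ≤ y1) (hy2 : 0 ≤ y2) :
    (0 < x0*y0 + x1*y1 + x2*y2) ↔ (0 < x0 ∧ 0 < y0) ∨ (0 < x1 ∧ 0 < y1) ∨ (0 < x2 ∧ 0 < y2) := by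
  constructor
  · intro h
    by_contra hc
    push_neg at hc
    obtain ⟨h0, h1, h2⟩ := hc
    have p0 : x0 * y0 ≤ 0 := by
      rcases hx0.eq_or_lt with h'|h'
      · rw [← h']; simp
      · have := h0 h'; nlinarith
    have p1 : x1 * y1 ≤ 0 := by
      rcases hx1.eq_or_lt with h'|h'
      · rw [← h']; simp
      · have := h1 h'; nlinarith
    have p2 : x2 * y2 ≤ 0 := by
      rcases hx2.eq_or_lt with h'|h'
      · rw [← h']; simp
      · have := h2 h'; nlinarith
    linarith
  · intro h
    have q0 : 0 ≤ x0 * y0 := mul_nonneg hx0 hy0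
    have q1 : 0 ≤ x1 * y1 := mul_nonneg hx1 hy1
    have q2 : 0 ≤ x2 * y2 := mul_nonneg hx2 hy2
    rcases h with ⟨h, h'⟩ | ⟨h, h'⟩ | ⟨h, h'⟩ <;> nlinarith [mul_pos h h']

lemma decide_dot {x0 x1 x2 y0 y1 y2 : ℝ} (hx0 : 0 ≤ x0) (hx1 : 0 ≤ x1) (hx2 : 0 ≤ x2)
    (hy0 : 0 ≤ y0) (hy1 : 0 ≤ y1) (hy2 : 0 ≤ y2) :
    (decide (0 < x0*y0 + x1*y1 + x2*y2) : Bool)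
      = (decide (0 < x0) && decide (0 < y0) || decide (0 < x1) && decide (0 < y1) ||
          decide (0 < x2) && decide (0 < y2)) := by
  rw [← Bool.decide_and, ← Bool.decide_and, ← Bool.decide_and, ← Bool.decide_or,
    ← Bool.decide_or, decide_eq_decide]
  rw [pos_dot hx0 hx1 hx2 hy0 hy1 hy2]
  tauto

lemma supp_mul {A B : Matrix (Fin 3) (Fin 3) ℝ} (hA : ∀ i j, 0 ≤ A i j)
    (hB : ∀ i j, 0 ≤ B i j) : supp (A * B) = bmul (supp A) (supp B) := by
  have entry : ∀ i j, (A * B) i j = A i 0 * B 0 j + A i 1 * B 1 j + A i 2 * B 2 j := by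
    intro i j; rw [Matrix.mul_apply, Fin.sum_univ_three]
  show (_,_,_,_,_,_,_,_,_) = (_,_,_,_,_,_,_,_,_)
  simp only [supp, bmul, Prod.mk.injEq]
  refine ⟨?_,?_,?_,?_,?_,?_,?_,?_,?_⟩ <;>
    (rw [entry]; exact decide_dot (hA _ _) (hA _ _) (hA _ _) (hB _ _) (hB _ _) (hB _ _))

lemma nonneg_mul {A B : Matrix (Fin 3) (Fin 3) ℝ} (hA : ∀ i j, 0 ≤ A i j)
    (hB : ∀ i j, 0 ≤ B i j) : ∀ i j, 0 ≤ (A * B) i j := by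
  intro i j
  rw [Matrix.mul_apply]
  exact Finset.sum_nonneg fun k _ => mul_nonneg (hA i k) (hB k j)

lemma Td01_eq {d0 d1 : ℝ} (h0 : d0 ≠ 0) (lam : ℝ) :
    Td ![d0,d0,d1] lam 0 1 = !![1-lam, lam, 0; lam, 1-lam, 0; 0, 0, 1] := by
  ext i j
  fin_cases i <;> fin_cases j <;>
    simp [Td, Pswap, Matrix.one_apply, Matrix.vecHead, Matrix.vecTail] <;> field_simp <;> simp

lemma Td02_eq {d0 d1 : ℝ} (h0 : d0 ≠ 0) (lam : ℝ) :
    Td ![d0,d0,d1] lam 0 2 =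
      !![1-lam*(d1/d0), 0, lam; 0, 1, 0; lam*(d1/d0), 0, 1-lam] := by
  ext i j
  fin_cases i <;> fin_cases j <;>
    simp [Td, Pswap, Matrix.one_apply, Matrix.vecHead, Matrix.vecTail] <;> ring

lemma Td12_eq {d0 d1 : ℝ} (h0 : d0 ≠ 0) (lam : ℝ) :
    Td ![d0,d0,d1] lam 1 2 =
      !![1, 0, 0; 0, 1-lam*(d1/d0), lam; 0, lam*(d1/d0), 1-lam] := by
  ext i j
  fin_cases i <;> fin_cases j <;>
    simp [Td, Pswap, Matrix.one_apply, Matrix.vecHead, Matrix.vecTail] <;> ring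

lemma Td_good (d0 d1 : ℝ) (h1 : 0 < d1) (h10 : d1 < d0) (lam : ℝ)
    (hl0 : 0 ≤ lam) (hl1 : lam ≤ 1) (i j : Fin 3) (hij : i < j) :
    (∀ k l, 0 ≤ Td ![d0,d0,d1] lam i j k l) ∧ supp (Td ![d0,d0,d1] lam i j) ∈ Gpat := by
  have hd0 : (0:ℝ) < d0 := h1.trans h10
  have hg0 : 0 < d1/d0 := div_pos h1 hd0
  have hg1 : d1/d0 < 1 := (div_lt_one hd0).mpr h10
  have hgl : lam * (d1/d0) ≤ lam := by nlinarith
  have hgl1 : lam * (d1/d0) < 1 := by nlinarith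
  have hgl0 : 0 ≤ lam * (d1/d0) := mul_nonneg hl0 hg0.le
  have hcase : i = 0 ∧ j = 1 ∨ i = 0 ∧ j = 2 ∨ i = 1 ∧ j = 2 := by
    fin_cases i <;> fin_cases j <;> revert hij <;> decide
  rcases hcase with ⟨hi,hj⟩|⟨hi,hj⟩|⟨hi,hj⟩ <;> subst hi <;> subst hj
  · -- pair (0,1)
    rw [Td01_eq hd0.ne' lam]
    constructor
    · intro k l
      fin_cases k <;> fin_cases l <;> simp [Matrix.vecHead, Matrix.vecTail] <;> linarith
    · rcases hl0.eq_or_lt with he|hlt0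
      · have hs : supp !![1-lam, lam, 0; lam, 1-lam, 0; 0, 0, 1]
            = ((true,false,false,false,true,false,false,false,true) : Pat) := by
          simp only [supp, Prod.mk.injEq]
          norm_num [Matrix.vecHead, Matrix.vecTail, Matrix.cons_val_two]
          repeat' apply And.intro
          all_goals linarith
        rw [hs]; decide
      · rcases hl1.eq_or_lt with he|hlt1
        · have hs : supp !![1-lam, lam, 0; lam, 1-lam, 0; 0, 0, 1]
              = ((false,true,false,true,false,false,false,false,true) : Pat) := by
            simp only [supp, Prod.mk.injEq]
            norm_num [Matrix.vecHead, Matrix.vecTail, Matrix.cons_val_two]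
            repeat' apply And.intro
            all_goals linarith
          rw [hs]; decide
        · have hs : supp !![1-lam, lam, 0; lam, 1-lam, 0; 0, 0, 1]
              = ((true,true,false,true,true,false,false,false,true) : Pat) := by
            simp only [supp, Prod.mk.injEq]
            norm_num [Matrix.vecHead, Matrix.vecTail, Matrix.cons_val_two]
            repeat' apply And.intro
            all_goals linarith
          rw [hs]; decide
  · -- pair (0,2)
    rw [Td02_eq hd0.ne' lam]
    constructor
    · intro k l
      fin_cases k <;> fin_cases l <;> simp [Matrix.vecHead, Matrix.vecTail] <;> linarith
    · rcases hl0.eq_or_lt with he|hlt0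
      · have hs : supp !![1-lam*(d1/d0), 0, lam; 0, 1, 0; lam*(d1/d0), 0, 1-lam]
            = ((true,false,false,false,true,false,false,false,true) : Pat) := by
          simp only [supp, Prod.mk.injEq]
          norm_num [Matrix.vecHead, Matrix.vecTail, Matrix.cons_val_two]
          repeat' apply And.intro
          all_goals linarith
        rw [hs]; decide
      · have hgl0' : 0 < lam * (d1/d0) := mul_pos hlt0 hg0
        rcases hl1.eq_or_lt with he|hlt1
        · have hs : supp !![1-lam*(d1/d0), 0, lam; 0, 1, 0; lam*(d1/d0), 0, 1-lam]
              = ((true,false,true,false,true,false,true,false,false) : Pat) := by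
            simp only [supp, Prod.mk.injEq]
            norm_num [Matrix.vecHead, Matrix.vecTail, Matrix.cons_val_two]
            repeat' apply And.intro
            all_goals linarith
          rw [hs]; decide
        · have hs : supp !![1-lam*(d1/d0), 0, lam; 0, 1, 0; lam*(d1/d0), 0, 1-lam]
              = ((true,false,true,false,true,false,true,false,true) : Pat) := by
            simp only [supp, Prod.mk.injEq]
            norm_num [Matrix.vecHead, Matrix.vecTail, Matrix.cons_val_two]
            repeat' apply And.intro
            all_goals linarith
          rw [hs]; decide
  · -- pair (1,2)
    rw [Td12_eq hd0.ne' lam]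
    constructor
    · intro k l
      fin_cases k <;> fin_cases l <;> simp [Matrix.vecHead, Matrix.vecTail] <;> linarith
    · rcases hl0.eq_or_lt with he|hlt0
      · have hs : supp !![1, 0, 0; 0, 1-lam*(d1/d0), lam; 0, lam*(d1/d0), 1-lam]
            = ((true,false,false,false,true,false,false,false,true) : Pat) := by
          simp only [supp, Prod.mk.injEq]
          norm_num [Matrix.vecHead, Matrix.vecTail, Matrix.cons_val_two]
          repeat' apply And.intro
          all_goals linarith
        rw [hs]; decide
      · have hgl0' : 0 < lam * (d1/d0) := mul_pos hlt0 hg0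
        rcases hl1.eq_or_lt with he|hlt1
        · have hs : supp !![1, 0, 0; 0, 1-lam*(d1/d0), lam; 0, lam*(d1/d0), 1-lam]
              = ((true,false,false,false,true,true,false,true,false) : Pat) := by
            simp only [supp, Prod.mk.injEq]
            norm_num [Matrix.vecHead, Matrix.vecTail, Matrix.cons_val_two]
            repeat' apply And.intro
            all_goals linarith
          rw [hs]; decide
        · have hs : supp !![1, 0, 0; 0, 1-lam*(d1/d0), lam; 0, lam*(d1/d0), 1-lam]
              = ((true,false,false,false,true,true,false,true,true) : Pat) := by
            simp only [supp, Prod.mk.injEq]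
            norm_num [Matrix.vecHead, Matrix.vecTail, Matrix.cons_val_two]
            repeat' apply And.intro
            all_goals linarith
          rw [hs]; decide

lemma prod_good (d0 d1 : ℝ) (h1 : 0 < d1) (h10 : d1 < d0) :
    ∀ L : List (ℝ × Fin 3 × Fin 3),
      (∀ t ∈ L, t.2.1 < t.2.2 ∧ t.1 ∈ Set.Icc (0:ℝ) 1) →
      (∀ i j, 0 ≤ (L.map fun t => Td ![d0,d0,d1] t.1 t.2.1 t.2.2).prod i j) ∧
      supp ((L.map fun t => Td ![d0,d0,d1] t.1 t.2.1 t.2.2).prod) ∈ S41 := by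
  intro L
  induction L with
  | nil =>
    intro _
    constructor
    · intro i j
      simp only [List.map_nil, List.prod_nil, Matrix.one_apply]
      split <;> norm_num
    · have hs : supp (1 : Matrix (Fin 3) (Fin 3) ℝ)
          = ((true,false,false,false,true,false,false,false,true) : Pat) := by
        simp only [supp, Prod.mk.injEq, Matrix.one_apply]
        norm_num [Fin.ext_iff]
      simp only [List.map_nil, List.prod_nil, hs]
      exact id_mem
  | cons t L ih =>
    intro h
    have ht := h t (List.mem_cons_self (a := t) (l := L))
    have hL := ih fun t' ht' => h t' (List.mem_cons_of_mem _ ht')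
    obtain ⟨g1, g2⟩ := Td_good d0 d1 h1 h10 t.1 ht.2.1 ht.2.2 t.2.1 t.2.2 ht.1
    simp only [List.map_cons, List.prod_cons]
    exact ⟨nonneg_mul g1 hL.1, by rw [supp_mul g1 hL.1]; exact closure41 _ g2 _ hL.2⟩

/-- for `d = (d₀, d₀, d₁)` with `0 < d₁ < d₀`, `γ = d₁/d₀` and
`1 - γ < φ < 1`, the matrix
`M = [[1-φ, φ, 0], [φ, 0, (1-φ)/γ], [0, 1-φ, 1-(1-φ)/γ]]` is `d`-stochastic but is
not a finite product of `T^d`-transforms. -/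
theorem stmt14 (d0 d1 : ℝ) (h1 : 0 < d1) (h10 : d1 < d0) (hsum : 2 * d0 + d1 = 1)
    (phi : ℝ) (hphi1 : 1 - d1 / d0 < phi) (hphi2 : phi < 1) :
    let d : Fin 3 → ℝ := ![d0, d0, d1]
    let γ : ℝ := d1 / d0
    let M : Matrix (Fin 3) (Fin 3) ℝ :=
      !![1 - phi, phi, 0; phi, 0, (1 - phi) / γ; 0, 1 - phi, 1 - (1 - phi) / γ]
    ((∀ i j, 0 ≤ M i j) ∧ (∀ j, ∑ i, M i j = 1) ∧ M.mulVec d = d) ∧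
    ¬ ∃ L : List (ℝ × Fin 3 × Fin 3),
        (∀ t ∈ L, t.2.1 < t.2.2 ∧ t.1 ∈ Set.Icc (0 : ℝ) 1) ∧
        M = (L.map fun t => Td d t.1 t.2.1 t.2.2).prod := by

  intro d γ M
  have hd : d = ![d0, d0, d1] := rfl
  have hγ : γ = d1 / d0 := rfl
  have hM : M = !![1 - phi, phi, 0; phi, 0, (1 - phi) / (d1/d0);
      0, 1 - phi, 1 - (1 - phi) / (d1/d0)] := rfl
  have hd0 : (0:ℝ) < d0 := h1.trans h10
  have hg0 : 0 < d1/d0 := div_pos h1 hd0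
  have hg1 : d1/d0 < 1 := (div_lt_one hd0).mpr h10
  have hphi0 : 0 < phi := by linarith
  have hq0 : 0 < (1 - phi) / (d1/d0) := div_pos (by linarith) hg0
  have hq1 : (1 - phi) / (d1/d0) < 1 := by
    rw [div_lt_one hg0]; linarith
  constructor
  · refine ⟨?_, ?_, ?_⟩
    · intro i j
      rw [hM]
      fin_cases i <;> fin_cases j <;>
        simp [Matrix.vecHead, Matrix.vecTail] <;> linarith
    · intro j
      rw [hM]
      fin_cases j <;>
        (try simp [Fin.sum_univ_three, Matrix.vecHead, Matrix.vecTail]) <;>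
        (try ring) <;> (try linarith)
    · funext i
      rw [hM, hd]
      fin_cases i <;>
        (try simp [Matrix.mulVec, dotProduct, Fin.sum_univ_three,
          Matrix.vecHead, Matrix.vecTail]) <;>
        (try field_simp) <;> (try ring)
  · rintro ⟨L, hL, hprod⟩
    have hgood := (prod_good d0 d1 h1 h10 L hL).2
    rw [← hd, ← hprod] at hgood
    have hs : supp M = ((true,true,false,true,false,true,false,true,true) : Pat) := by
      rw [hM]
      simp only [supp, Prod.mk.injEq]
      norm_num [Matrix.vecHead, Matrix.vecTail, Matrix.cons_val_two]
      repeat' apply And.intro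
      all_goals linarith
    rw [hs] at hgood
    exact SM_not_mem hgood
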